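/- Let G ≤ Aut(T) be self-similar and contracting. Then for every integer s ≥ 1 the s-th Basilica group Bas_s(G) is contracting. -/

import Mathlib

/-!
Groups of automorphisms of the `m`-regular rooted tree, encoded via portraits:
an automorphism is determined by the family of its labels (local actions)
`label : List (Fin m) → Equiv.Perm (Fin m)`.
-/

namespace Basilica

/-- An automorphism of the `m`-regular rooted tree, given by its portrait. -/
structure TreeAut (m : ℕ) where
  label : List (Fin m) → Equiv.Perm (Fin m)

namespace TreeAut

variable {m : ℕ}

lemma ext_label {a b : TreeAut m} (h : ∀ u, a.label u = b.label u) : a = b := by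
  cases a
  cases b
  simp only [mk.injEq]
  exact funext h

/-- The section of an automorphism at a vertex. -/
def sec (a : TreeAut m) (v : List (Fin m)) : TreeAut m := ⟨fun u => a.label (v ++ u)⟩

@[simp] lemma sec_label (a : TreeAut m) (v u : List (Fin m)) :
    (a.sec v).label u = a.label (v ++ u) := rfl

@[simp] lemma sec_nil (a : TreeAut m) : a.sec [] = a := rfl

lemma sec_sec (a : TreeAut m) (v w : List (Fin m)) : (a.sec v).sec w = a.sec (v ++ w) :=
  ext_label fun u => by simp [List.append_assoc]

/-- The action of a tree automorphism on the vertices (finite words). -/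
def apply : TreeAut m → List (Fin m) → List (Fin m)
  | _, [] => []
  | a, x :: u => a.label [] x :: (a.sec [x]).apply u

/-- The inverse action of a tree automorphism on the vertices. -/
def invApply : TreeAut m → List (Fin m) → List (Fin m)
  | _, [] => []
  | a, x :: u => (a.label [])⁻¹ x :: (a.sec [(a.label [])⁻¹ x]).invApply u

instance : One (TreeAut m) := ⟨⟨fun _ => 1⟩⟩
instance : Mul (TreeAut m) := ⟨fun a b => ⟨fun u => a.label (b.apply u) * b.label u⟩⟩
instance : Inv (TreeAut m) := ⟨fun a => ⟨fun u => (a.label (a.invApply u))⁻¹⟩⟩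

@[simp] lemma one_label (u : List (Fin m)) : (1 : TreeAut m).label u = 1 := rfl

@[simp] lemma mul_label (a b : TreeAut m) (u : List (Fin m)) :
    (a * b).label u = a.label (b.apply u) * b.label u := rfl

@[simp] lemma inv_label (a : TreeAut m) (u : List (Fin m)) :
    a⁻¹.label u = (a.label (a.invApply u))⁻¹ := rfl

@[simp] lemma one_sec (v : List (Fin m)) : (1 : TreeAut m).sec v = 1 := rfl

@[simp] lemma apply_nil (a : TreeAut m) : a.apply [] = [] := rfl

lemma apply_cons (a : TreeAut m) (x : Fin m) (u : List (Fin m)) :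
    a.apply (x :: u) = a.label [] x :: (a.sec [x]).apply u := rfl

@[simp] lemma one_apply (u : List (Fin m)) : (1 : TreeAut m).apply u = u := by
  induction u with
  | nil => rfl
  | cons x u ih => simp [apply_cons, ih]

lemma apply_append (a : TreeAut m) (v u : List (Fin m)) :
    a.apply (v ++ u) = a.apply v ++ (a.sec v).apply u := by
  induction v generalizing a with
  | nil => simp
  | cons x v ih =>
      simp only [List.cons_append, apply_cons, ih, sec_sec, List.singleton_append,
        List.nil_append]

lemma mul_sec (a b : TreeAut m) (v : List (Fin m)) :
    (a * b).sec v = a.sec (b.apply v) * b.sec v :=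
  ext_label fun u => by simp [apply_append]

lemma mul_apply (a b : TreeAut m) (u : List (Fin m)) :
    (a * b).apply u = a.apply (b.apply u) := by
  induction u generalizing a b with
  | nil => rfl
  | cons x u ih =>
      rw [apply_cons, mul_sec, ih]
      simp [apply_cons, Equiv.Perm.mul_apply]

lemma invApply_apply (a : TreeAut m) (u : List (Fin m)) : a.invApply (a.apply u) = u := by
  induction u generalizing a with
  | nil => rfl
  | cons x u ih => simp [apply_cons, invApply, ih]

lemma apply_invApply (a : TreeAut m) (u : List (Fin m)) : a.apply (a.invApply u) = u := by
  induction u generalizing a with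
  | nil => rfl
  | cons x u ih => simp [invApply, apply_cons, ih]

instance : Group (TreeAut m) where
  mul_assoc a b c := ext_label fun u => by simp [mul_apply, mul_assoc]
  one_mul a := ext_label fun u => by simp
  mul_one a := ext_label fun u => by simp
  inv_mul_cancel a := ext_label fun u => by simp [invApply_apply]

lemma apply_injective (a : TreeAut m) : Function.Injective a.apply := by
  intro x y h
  have hx := invApply_apply a x
  rw [h, invApply_apply] at hx
  exact hx.symm

@[simp] lemma apply_length (a : TreeAut m) (u : List (Fin m)) :
    (a.apply u).length = u.length := by
  induction u generalizing a with
  | nil => rfl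
  | cons x u ih => simp [apply_cons, ih]

/-- `cons ρ f` is `ρ · ψ₁⁻¹(f 0, …, f (m-1))`: the automorphism with root label `ρ`
and first-layer sections `f x`. -/
def cons (ρ : Equiv.Perm (Fin m)) (f : Fin m → TreeAut m) : TreeAut m :=
  ⟨fun u =>
    match u with
    | [] => ρ
    | x :: v => (f x).label v⟩

end TreeAut

variable {m : ℕ}

/-- The `n`-th layer stabiliser `St_G(n)` of a group `G` of tree automorphisms. -/
def layerStab (G : Subgroup (TreeAut m)) (n : ℕ) : Subgroup (TreeAut m) where
  carrier := {g | g ∈ G ∧ ∀ u : List (Fin m), u.length = n → g.apply u = u}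
  one_mem' := ⟨G.one_mem, fun u _ => TreeAut.one_apply u⟩
  mul_mem' := by
    rintro a b ⟨haG, ha⟩ ⟨hbG, hb⟩
    refine ⟨G.mul_mem haG hbG, fun u hu => ?_⟩
    rw [TreeAut.mul_apply, hb u hu, ha u hu]
  inv_mem' := by
    rintro a ⟨haG, ha⟩
    refine ⟨G.inv_mem haG, fun u hu => ?_⟩
    apply TreeAut.apply_injective a
    rw [← TreeAut.mul_apply, mul_inv_cancel, TreeAut.one_apply, ha u hu]

/-- A group of tree automorphisms acts spherically transitively if it acts
transitively on every layer. -/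
def SphericallyTransitive (G : Subgroup (TreeAut m)) : Prop :=
  ∀ u v : List (Fin m), u.length = v.length → ∃ g ∈ G, g.apply u = v

/-- A group of tree automorphisms is self-similar if it is closed under sections. -/
def SelfSimilar (G : Subgroup (TreeAut m)) : Prop :=
  ∀ g ∈ G, ∀ v : List (Fin m), g.sec v ∈ G

/-- A spherically transitive group is fractal if `st_G(u)|_u = G` for all vertices `u`. -/
def Fractal (G : Subgroup (TreeAut m)) : Prop :=
  SphericallyTransitive G ∧
    ∀ u : List (Fin m),
      {h : TreeAut m | ∃ g ∈ G, g.apply u = u ∧ g.sec u = h} = (G : Set (TreeAut m))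

/-- A spherically transitive group is strongly fractal if `St_G(1)|_x = G` for all `x ∈ X`. -/
def StronglyFractal (G : Subgroup (TreeAut m)) : Prop :=
  SphericallyTransitive G ∧
    ∀ x : Fin m,
      {h : TreeAut m | ∃ g ∈ layerStab G 1, g.sec [x] = h} = (G : Set (TreeAut m))

/-- A spherically transitive group is very strongly fractal if
`St_G(n+1)|_x = St_G(n)` for all `n` and `x ∈ X`. -/
def VeryStronglyFractal (G : Subgroup (TreeAut m)) : Prop :=
  SphericallyTransitive G ∧
    ∀ (n : ℕ) (x : Fin m),
      {h : TreeAut m | ∃ g ∈ layerStab G (n + 1), g.sec [x] = h}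
        = (layerStab G n : Set (TreeAut m))

/-- A group of tree automorphisms is contracting if it has a finite nucleus. -/
def Contracting (G : Subgroup (TreeAut m)) : Prop :=
  ∃ N : Set (TreeAut m), N.Finite ∧ N ⊆ (G : Set (TreeAut m)) ∧
    ∀ g ∈ G, ∃ k : ℕ, ∀ v : List (Fin m), k < v.length → g.sec v ∈ N

/-- A tree automorphism is finite-state if it has finitely many distinct sections. -/
def FiniteState (f : TreeAut m) : Prop :=
  {h : TreeAut m | ∃ u : List (Fin m), f.sec u = h}.Finite

/-- A tree automorphism is bounded if the number of nontrivial sections at the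
`n`-th layer is bounded uniformly in `n`. -/
def BoundedAut (f : TreeAut m) : Prop :=
  ∃ C : ℕ, ∀ n : ℕ, {u : List (Fin m) | u.length = n ∧ f.sec u ≠ 1}.ncard ≤ C

/-- The `n`-th rigid layer stabiliser: the subgroup generated by the rigid vertex
stabilisers of the vertices of the `n`-th layer. -/
def rigidLayerStab (G : Subgroup (TreeAut m)) (n : ℕ) : Subgroup (TreeAut m) :=
  Subgroup.closure {g | g ∈ G ∧ ∃ v : List (Fin m), v.length = n ∧
    ∀ u : List (Fin m), ¬ v <+: u → g.apply u = u}

/-- A weakly branch group: spherically transitive with nontrivial rigid layer stabilisers. -/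
def WeaklyBranch (G : Subgroup (TreeAut m)) : Prop :=
  SphericallyTransitive G ∧ ∀ n : ℕ, rigidLayerStab G n ≠ ⊥

/-- `H` is weakly regular branch over `K ≤ H` if `ψ₁(St_K(1)) ⊇ K × ⋯ × K`. -/
def WeaklyRegularBranchOver (H K : Subgroup (TreeAut m)) : Prop :=
  K ≤ H ∧ ∀ f : Fin m → TreeAut m, (∀ x, f x ∈ K) → TreeAut.cons 1 f ∈ K

/-- The portrait of the `i`-th Basilica monomorphism `β^s_i` applied to `g`,
computed by recursion over vertices. -/
def betaLabel [NeZero m] (s : ℕ) : List (Fin m) → ℕ → TreeAut m → Equiv.Perm (Fin m)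
  | [], i, g => if i = 0 then g.label [] else 1
  | x :: u, i, g =>
      if i = 0 then betaLabel s u (s - 1) (g.sec [x])
      else if x = 0 then betaLabel s u (i - 1) g else 1

/-- The Basilica monomorphism `β^s_i : Aut(T) → Aut(T)`, satisfying
`β_i(g) = ψ₁⁻¹(β_{i-1}(g), 1, …, 1)` for `1 ≤ i ≤ s-1` and
`β_0(g) = g|^ε · ψ₁⁻¹(β_{s-1}(g|_0), …, β_{s-1}(g|_{m-1}))`. -/
def betaAut [NeZero m] (s i : ℕ) (g : TreeAut m) : TreeAut m := ⟨fun u => betaLabel s u i g⟩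

/-- The `s`-th Basilica group of `G`. -/
def basilica [NeZero m] (s : ℕ) (G : Subgroup (TreeAut m)) : Subgroup (TreeAut m) :=
  Subgroup.closure {b | ∃ g ∈ G, ∃ i < s, b = betaAut s i g}

/-- The subgroup `S_i = ⟨β_j(G) : j ≠ i⟩` of the `s`-th Basilica group. -/
def Ssub [NeZero m] (s i : ℕ) (G : Subgroup (TreeAut m)) : Subgroup (TreeAut m) :=
  Subgroup.closure {b | ∃ g ∈ G, ∃ j < s, j ≠ i ∧ b = betaAut s j g}

/-- The normal closure `N_i` of `S_i` in the `s`-th Basilica group of `G`. -/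
def Nsub [NeZero m] (s i : ℕ) (G : Subgroup (TreeAut m)) : Subgroup (TreeAut m) :=
  Subgroup.closure {x | ∃ b ∈ basilica s G, ∃ y ∈ Ssub s i G, x = b * y * b⁻¹}

/-- The `i`-th splitting kernel `K_i = β_i⁻¹(β_i(G) ∩ N_i)` of `G`, as a set. -/
def Kset [NeZero m] (s i : ℕ) (G : Subgroup (TreeAut m)) : Set (TreeAut m) :=
  {g | g ∈ G ∧ betaAut s i g ∈ Nsub s i G}

/-- The portrait of the monomorphism `π_i` (for the `d`-fold diagonal construction). -/
def piLabel (d : ℕ) : List (Fin m) → ℕ → TreeAut m → Equiv.Perm (Fin m)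
  | [], i, g => if i = 0 then g.label [] else 1
  | x :: u, i, g =>
      if i = 0 then piLabel d u (d - 1) (g.sec [x])
      else piLabel d u (i - 1) g

/-- The monomorphism `π_i : Aut(T) → Aut(T)`, satisfying
`π_0(g) = g|^ε · ψ₁⁻¹(π_{d-1}(g|_0), …, π_{d-1}(g|_{m-1}))` and
`π_i(g) = ψ₁⁻¹(π_{i-1}(g), …, π_{i-1}(g))` for `1 ≤ i ≤ d-1`. -/
def piAut (d i : ℕ) (g : TreeAut m) : TreeAut m := ⟨fun u => piLabel d u i g⟩

/-- The generator of the `m`-adic odometer: `a = σ · ψ₁⁻¹(a, 1, …, 1)` with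
`σ = (0 1 … m-1)`. -/
def odometer (m : ℕ) [NeZero m] : TreeAut m :=
  ⟨fun u => if ∀ x ∈ u, x = 0 then finRotate m else 1⟩

/-- The group `O_m^d = D_d(O_m) = ⟨π_i(a) : 0 ≤ i ≤ d-1⟩`. -/
def OdPow (m d : ℕ) [NeZero m] : Subgroup (TreeAut m) :=
  Subgroup.closure {x | ∃ i < d, x = piAut d i (odometer m)}

/-- The group `Γ` of all automorphisms all of whose labels are powers of the
cycle `σ = (0 1 … m-1)`. -/
def Gamma (m : ℕ) : Subgroup (TreeAut m) where
  carrier := {g | ∀ u : List (Fin m), g.label u ∈ Subgroup.zpowers (finRotate m)}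
  one_mem' := by
    intro u
    rw [TreeAut.one_label]
    exact one_mem _
  mul_mem' := by
    intro a b ha hb u
    rw [TreeAut.mul_label]
    exact mul_mem (ha _) (hb _)
  inv_mem' := by
    intro a ha u
    rw [TreeAut.inv_label]
    exact inv_mem (ha _)

/-- The Hausdorff dimension of `G ≤ Γ` relative to `Γ`. -/
noncomputable def hdim (m : ℕ) (G : Subgroup (TreeAut m)) : ℝ :=
  Filter.liminf (fun n : ℕ =>
    Real.logb m ((layerStab G n).relIndex G) /
      Real.logb m ((layerStab (Gamma m) n).relIndex (Gamma m))) Filter.atTop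

/-- The series of obstructions `o_G(n) = m·log_m|L_G(n-1)| - log_m|L_G(n)|` (for `n ≥ 1`),
where `L_G(n) = St_G(n)/St_G(n+1)`. -/
noncomputable def obstruction (m : ℕ) (G : Subgroup (TreeAut m)) (n : ℕ) : ℝ :=
  m * Real.logb m ((layerStab G n).relIndex (layerStab G (n - 1)))
    - Real.logb m ((layerStab G (n + 1)).relIndex (layerStab G n))

/-- The permutation group induced by `G` on the first layer acts regularly on `X`. -/
def RegularRootAction (G : Subgroup (TreeAut m)) : Prop :=
  (∀ x y : Fin m, ∃ g ∈ G, g.label [] x = y) ∧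
    ∀ g ∈ G, ∀ x : Fin m, g.label [] x = x → g.label [] = 1



section AuxProof

set_option linter.unusedSectionVars false

open TreeAut

variable {m : ℕ} [NeZero m]

lemma label_nil_mul (a b : TreeAut m) : (a * b).label [] = a.label [] * b.label [] := by
  simp [TreeAut.mul_label]

lemma sec_single_mul (a b : TreeAut m) (x : Fin m) :
    (a * b).sec [x] = a.sec [b.label [] x] * b.sec [x] := by
  rw [TreeAut.mul_sec, TreeAut.apply_cons]
  simp

lemma betaAut_label_nil (s i : ℕ) (g : TreeAut m) :
    (betaAut s i g).label [] = if i = 0 then g.label [] else 1 := rfl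

lemma betaAut_sec_zero (s : ℕ) (g : TreeAut m) (x : Fin m) :
    (betaAut s 0 g).sec [x] = betaAut s (s - 1) (g.sec [x]) :=
  TreeAut.ext_label fun u => by
    simp [betaAut, TreeAut.sec_label, betaLabel]

lemma betaAut_sec_pos (s i : ℕ) (hi : i ≠ 0) (g : TreeAut m) (x : Fin m) :
    (betaAut s i g).sec [x] = if x = 0 then betaAut s (i - 1) g else 1 :=
  TreeAut.ext_label fun u => by
    by_cases hx : x = 0 <;> simp [betaAut, TreeAut.sec_label, betaLabel, hi, hx]

lemma betaAut_one (s i : ℕ) : betaAut s i (1 : TreeAut m) = 1 :=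
  TreeAut.ext_label fun u => by
    induction u generalizing i with
    | nil => by_cases h : i = 0 <;> simp [betaAut, betaLabel, h]
    | cons x u ih =>
        by_cases h : i = 0 <;> by_cases hx : x = 0 <;>
          simp only [betaAut, betaLabel, h, hx, TreeAut.one_sec, if_true, if_false,
            TreeAut.one_label, ite_self] <;>
          first
            | rfl
            | simpa [betaAut] using ih _

lemma betaAut_mul (s i : ℕ) (g h : TreeAut m) :
    betaAut s i (g * h) = betaAut s i g * betaAut s i h := by
  suffices H : ∀ u : List (Fin m), ∀ i (g h : TreeAut m),
      (betaAut s i (g * h)).label u = (betaAut s i g * betaAut s i h).label u from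
    TreeAut.ext_label fun u => H u i g h
  intro u
  induction u with
  | nil =>
      intro i g h
      by_cases hi : i = 0 <;>
        simp [label_nil_mul, betaAut_label_nil, hi]
  | cons x u ih =>
      intro i g h
      have lab : ∀ (a : TreeAut m), a.label (x :: u) = (a.sec [x]).label u := fun a => by
        rw [TreeAut.sec_label]; rfl
      rw [lab, lab]
      by_cases hi : i = 0
      · subst hi
        have hr : (betaAut s 0 g * betaAut s 0 h).sec [x]
            = betaAut s (s - 1) (g.sec [h.label [] x]) * betaAut s (s - 1) (h.sec [x]) := by
          rw [sec_single_mul, betaAut_sec_zero, betaAut_sec_zero, betaAut_label_nil]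
          simp
        rw [betaAut_sec_zero, sec_single_mul, hr]
        exact ih _ _ _
      · have hx0 : (betaAut s i h).label [] x = x := by simp [betaAut_label_nil, hi]
        have hr : (betaAut s i g * betaAut s i h).sec [x]
            = if x = 0 then betaAut s (i - 1) g * betaAut s (i - 1) h else 1 := by
          rw [sec_single_mul, hx0, betaAut_sec_pos s i hi, betaAut_sec_pos s i hi]
          by_cases hx : x = 0 <;> simp [hx]
        rw [hr, betaAut_sec_pos s i hi]
        by_cases hx : x = 0 <;> simp only [hx, if_true, if_false]
        · exact ih _ _ _

lemma betaAut_inv (s i : ℕ) (g : TreeAut m) :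
    betaAut s i g⁻¹ = (betaAut s i g)⁻¹ := by
  rw [eq_inv_iff_mul_eq_one, ← betaAut_mul, inv_mul_cancel, betaAut_one]

end AuxProof
section AuxProof2

set_option linter.unusedSectionVars false

open TreeAut

variable {m : ℕ} [NeZero m]

/-- Sections of an element with a contraction bound form a finite set. -/
lemma sections_finite {g : TreeAut m} {N : Set (TreeAut m)} (hN : N.Finite) (k : ℕ)
    (h : ∀ v : List (Fin m), k < v.length → g.sec v ∈ N) :
    {h' : TreeAut m | ∃ v, g.sec v = h'}.Finite := by
  apply Set.Finite.subset (((List.finite_length_le (Fin m) k).image (fun v => g.sec v)).union hN)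
  rintro h' ⟨v, rfl⟩
  by_cases hv : v.length ≤ k
  · exact Or.inl ⟨v, hv, rfl⟩
  · exact Or.inr (h v (by omega))

/-- Words representing products of `β`-images. -/
def evalW (s : ℕ) : List (ℕ × TreeAut m) → TreeAut m
  | [] => 1
  | p :: R => evalW s R * betaAut s p.1 p.2

def secW (s : ℕ) : List (ℕ × TreeAut m) → Fin m → List (ℕ × TreeAut m)
  | [], _ => []
  | p :: R, x =>
      if p.1 = 0 then (s - 1, p.2.sec [x]) :: secW s R (p.2.label [] x)
      else if x = 0 then (p.1 - 1, p.2) :: secW s R x else secW s R x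

/-- `AllS R x`: no letter of the word `R` is deleted in the section at `x`. -/
def AllS : List (ℕ × TreeAut m) → Fin m → Prop
  | [], _ => True
  | p :: R, x => if p.1 = 0 then AllS R (p.2.label [] x) else (x = 0 ∧ AllS R x)

/-- Product of the contents of the letters of index `j`. -/
def PRd : List (ℕ × TreeAut m) → ℕ → TreeAut m
  | [], _ => 1
  | p :: R, j => if p.1 = j then PRd R j * p.2 else PRd R j

/-- Product of the contents of the maximal head block of letters of index `j`. -/
def dAux : List (ℕ × TreeAut m) → ℕ → TreeAut m
  | [], _ => 1
  | p :: R, j => if p.1 = j then dAux R j * p.2 else 1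

/-- Canonical continuation direction. -/
def cW (R : List (ℕ × TreeAut m)) : Fin m := ((dAux R 0).label [])⁻¹ 0

def iterW (s : ℕ) (R : List (ℕ × TreeAut m)) : ℕ → List (ℕ × TreeAut m)
  | 0 => R
  | k + 1 => secW s (iterW s R k) (cW (iterW s R k))

def spineW (s : ℕ) (R : List (ℕ × TreeAut m)) : ℕ → List (Fin m)
  | 0 => []
  | k + 1 => spineW s R k ++ [cW (iterW s R k)]

@[simp] lemma evalW_nil (s : ℕ) : evalW s ([] : List (ℕ × TreeAut m)) = 1 := rfl
@[simp] lemma evalW_cons (s : ℕ) (p : ℕ × TreeAut m) (R) :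
    evalW s (p :: R) = evalW s R * betaAut s p.1 p.2 := rfl

lemma evalW_append (s : ℕ) (A B : List (ℕ × TreeAut m)) :
    evalW s (A ++ B) = evalW s B * evalW s A := by
  induction A with
  | nil => simp
  | cons p A ih => simp [ih, mul_assoc]

/-- The key section computation: sections of word evaluations are word evaluations. -/
lemma evalW_sec (s : ℕ) (R : List (ℕ × TreeAut m)) (x : Fin m) :
    (evalW s R).sec [x] = evalW s (secW s R x) := by
  induction R generalizing x with
  | nil => simp [secW, TreeAut.one_sec]
  | cons p R ih =>
      obtain ⟨i, g⟩ := p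
      rw [evalW_cons, sec_single_mul]
      by_cases hi : i = 0
      · subst hi
        simp only [betaAut_label_nil, if_true, reduceIte]
        rw [betaAut_sec_zero, ih]
        simp [secW]
      · have : (betaAut s i g).label [] x = x := by simp [betaAut_label_nil, hi]
        rw [this, betaAut_sec_pos s i hi, ih]
        by_cases hx : x = 0
        · simp [secW, hi, hx]
        · simp [secW, hi, hx]

lemma secW_length_le (s : ℕ) (R : List (ℕ × TreeAut m)) (x : Fin m) :
    (secW s R x).length ≤ R.length := by
  induction R generalizing x with
  | nil => simp [secW]
  | cons p R ih =>
      by_cases hi : p.1 = 0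
      · simpa [secW, hi] using ih _
      · by_cases hx : x = 0
        · simpa [secW, hi, hx] using ih _
        · simp only [secW, hi, hx, if_false]
          exact le_trans (ih _) (Nat.le_succ _)

lemma allS_of_length_eq (s : ℕ) {R : List (ℕ × TreeAut m)} {x : Fin m}
    (h : (secW s R x).length = R.length) : AllS R x := by
  induction R generalizing x with
  | nil => trivial
  | cons p R ih =>
      by_cases hi : p.1 = 0
      · simp only [secW, hi, if_true, List.length_cons, Nat.succ_inj, reduceIte] at h
        exact by simpa [AllS, hi] using ih h
      · by_cases hx : x = 0
        · simp only [secW, hi, hx, if_false, if_true, reduceIte, List.length_cons,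
            Nat.succ_inj] at h
          exact by simp [AllS, hi, hx, ih h]
        · exfalso
          simp only [secW, hi, hx, if_false, reduceIte] at h
          have := secW_length_le s R x
          rw [h] at this
          simpa using this

lemma length_secW_of_allS (s : ℕ) {R : List (ℕ × TreeAut m)} {x : Fin m} (h : AllS R x) :
    (secW s R x).length = R.length := by
  induction R generalizing x with
  | nil => simp [secW]
  | cons p R ih =>
      by_cases hi : p.1 = 0
      · simp only [AllS, hi, if_true, reduceIte] at h
        simp [secW, hi, ih h]
      · simp only [AllS, hi, reduceIte] at h
        obtain ⟨hx, h⟩ := h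
        subst hx
        simp [secW, hi, ih h]

lemma length_secW_lt (s : ℕ) {R : List (ℕ × TreeAut m)} {x : Fin m} (h : ¬ AllS R x) :
    (secW s R x).length < R.length := by
  rcases lt_or_eq_of_le (secW_length_le s R x) with h' | h'
  · exact h'
  · exact absurd (allS_of_length_eq s h') h

lemma allS_of_all_zero {R : List (ℕ × TreeAut m)} (hz : ∀ p ∈ R, p.1 = 0) (x : Fin m) :
    AllS R x := by
  induction R generalizing x with
  | nil => trivial
  | cons p R ih =>
      have hp : p.1 = 0 := hz p (by simp)
      simp only [AllS, hp, if_true, reduceIte]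
      exact ih (fun q hq => hz q (by simp [hq])) _

end AuxProof2
section AuxProof3

set_option linter.unusedSectionVars false
set_option linter.unnecessarySimpa false

open TreeAut

variable {m : ℕ} [NeZero m]

instance : Inhabited (TreeAut m) := ⟨1⟩

lemma evalW_label_nil (s : ℕ) (R : List (ℕ × TreeAut m)) :
    (evalW s R).label [] = (PRd R 0).label [] := by
  induction R with
  | nil => rfl
  | cons p R ih =>
      rw [evalW_cons, label_nil_mul, ih, betaAut_label_nil]
      by_cases hi : p.1 = 0 <;> simp [PRd, hi, label_nil_mul]

lemma PRd_secW (s : ℕ) {R : List (ℕ × TreeAut m)} {x : Fin m}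
    (hA : AllS R x) (hV : ∀ p ∈ R, p.1 < s) :
    (∀ j, j + 1 < s → PRd (secW s R x) j = PRd R (j + 1)) ∧
      PRd (secW s R x) (s - 1) = (PRd R 0).sec [x] := by
  induction R generalizing x with
  | nil => simp [secW, PRd, TreeAut.one_sec]
  | cons p R ih =>
      have hVR : ∀ q ∈ R, q.1 < s := fun q hq => hV q (by simp [hq])
      have his : p.1 < s := hV p (by simp)
      by_cases hi : p.1 = 0
      · simp only [AllS, hi, if_true, reduceIte] at hA
        obtain ⟨ih1, ih2⟩ := ih hA hVR
        constructor
        · intro j hj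
          have hne : ¬ (s - 1 = j) := by omega
          simp only [secW, hi, if_true, reduceIte, PRd, hne, if_false]
          rw [ih1 j hj]
          simp [PRd]
        · have e1 : secW s (p :: R) x = (s - 1, p.2.sec [x]) :: secW s R (p.2.label [] x) := by
            simp [secW, hi]
          have e2 : PRd (p :: R) 0 = PRd R 0 * p.2 := by simp [PRd, hi]
          rw [e1, e2]
          have e3 : PRd ((s - 1, p.2.sec [x]) :: secW s R (p.2.label [] x)) (s - 1)
              = PRd (secW s R (p.2.label [] x)) (s - 1) * p.2.sec [x] := by simp [PRd]
          rw [e3, ih2]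
          exact (sec_single_mul _ _ _).symm
      · simp only [AllS, hi, reduceIte] at hA
        obtain ⟨hx, hA⟩ := hA
        subst hx
        obtain ⟨ih1, ih2⟩ := ih hA hVR
        constructor
        · intro j hj
          simp only [secW, hi, if_pos rfl, reduceIte, PRd]
          by_cases hij : p.1 - 1 = j
          · have hpj : p.1 = j + 1 := by omega
            rw [if_pos hij, ih1 j hj, hpj]
            simp [PRd]
          · have hpj : ¬ (p.1 = j + 1) := by omega
            rw [if_neg hij, ih1 j hj]
            simp [PRd, hpj]
        · have hne : ¬ (p.1 - 1 = s - 1) := by omega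
          have e1 : secW s (p :: R) 0 = (p.1 - 1, p.2) :: secW s R 0 := by
            simp [secW, hi]
          rw [e1]
          have e2 : PRd ((p.1 - 1, p.2) :: secW s R 0) (s - 1)
              = PRd (secW s R 0) (s - 1) := by simp [PRd, hne]
          rw [e2, ih2]
          simp [PRd, hi]

lemma dAux_secW_top (s : ℕ) {R : List (ℕ × TreeAut m)} {x : Fin m}
    (hA : AllS R x) (hV : ∀ p ∈ R, p.1 < s) :
    dAux (secW s R x) (s - 1) = (dAux R 0).sec [x] := by
  induction R generalizing x with
  | nil => simp [secW, dAux, TreeAut.one_sec]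
  | cons p R ih =>
      have hVR : ∀ q ∈ R, q.1 < s := fun q hq => hV q (by simp [hq])
      have his : p.1 < s := hV p (by simp)
      by_cases hi : p.1 = 0
      · simp only [AllS, hi, if_true, reduceIte] at hA
        have e1 : secW s (p :: R) x = (s - 1, p.2.sec [x]) :: secW s R (p.2.label [] x) := by
          simp [secW, hi]
        have e2 : dAux (p :: R) 0 = dAux R 0 * p.2 := by simp [dAux, hi]
        rw [e1, e2]
        have e3 : dAux ((s - 1, p.2.sec [x]) :: secW s R (p.2.label [] x)) (s - 1)
            = dAux (secW s R (p.2.label [] x)) (s - 1) * p.2.sec [x] := by simp [dAux]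
        rw [e3, ih hA hVR]
        exact (sec_single_mul _ _ _).symm
      · simp only [AllS, hi, reduceIte] at hA
        obtain ⟨hx, hA⟩ := hA
        subst hx
        have hne : ¬ (p.1 - 1 = s - 1) := by omega
        simp [secW, hi, dAux, hne, TreeAut.one_sec]

lemma dAux_secW_shift (s : ℕ) {R : List (ℕ × TreeAut m)} {x : Fin m}
    (hA : AllS R x) (hV : ∀ p ∈ R, p.1 < s) (j : ℕ) (hj1 : 1 ≤ j) (hjs : j < s) :
    dAux (secW s R x) (j - 1) = dAux R j := by
  induction R generalizing x with
  | nil => simp [secW, dAux]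
  | cons p R ih =>
      have hVR : ∀ q ∈ R, q.1 < s := fun q hq => hV q (by simp [hq])
      have his : p.1 < s := hV p (by simp)
      by_cases hi : p.1 = 0
      · have hne : ¬ (s - 1 = j - 1) := by omega
        have hne' : ¬ (p.1 = j) := by omega
        simp only [AllS, hi, if_true, reduceIte] at hA
        simp [secW, hi, dAux, hne, hne']
        exact fun h0 => absurd h0 (by omega)
      · simp only [AllS, hi, reduceIte] at hA
        obtain ⟨hx, hA⟩ := hA
        subst hx
        simp only [secW, hi, if_pos rfl, reduceIte, dAux]
        by_cases hij : p.1 = j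
        · have : p.1 - 1 = j - 1 := by omega
          rw [if_pos this, if_pos hij, ih hA hVR]
        · have : ¬ (p.1 - 1 = j - 1) := by omega
          rw [if_neg this, if_neg hij]

/-- The maximal-head-block product. -/
def DRd : List (ℕ × TreeAut m) → TreeAut m
  | [] => 1
  | p :: R => dAux R p.1 * p.2

lemma dAux_zero_eq_DRd {R : List (ℕ × TreeAut m)} (hR : R ≠ []) :
    dAux R 0 = if R.headI.1 = 0 then DRd R else 1 := by
  cases R with
  | nil => exact absurd rfl hR
  | cons p R =>
      by_cases hi : p.1 = 0 <;> simp [dAux, DRd, hi]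

lemma DRd_secW (s : ℕ) {R : List (ℕ × TreeAut m)} {x : Fin m}
    (hA : AllS R x) (hV : ∀ p ∈ R, p.1 < s) (hR : R ≠ []) :
    DRd (secW s R x) = if R.headI.1 = 0 then (DRd R).sec [x] else DRd R := by
  cases R with
  | nil => exact absurd rfl hR
  | cons p R =>
      have hVR : ∀ q ∈ R, q.1 < s := fun q hq => hV q (by simp [hq])
      have his : p.1 < s := hV p (by simp)
      by_cases hi : p.1 = 0
      · simp only [AllS, hi, if_true, reduceIte] at hA
        have e1 : secW s (p :: R) x = (s - 1, p.2.sec [x]) :: secW s R (p.2.label [] x) := by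
          simp [secW, hi]
        rw [e1]
        have e2 : DRd ((s - 1, p.2.sec [x]) :: secW s R (p.2.label [] x))
            = dAux (secW s R (p.2.label [] x)) (s - 1) * p.2.sec [x] := rfl
        rw [e2, dAux_secW_top s hA hVR]
        simp only [List.headI, hi, reduceIte]
        have e3 : DRd (p :: R) = dAux R p.1 * p.2 := rfl
        rw [e3, hi]
        exact (sec_single_mul _ _ _).symm
      · simp only [AllS, hi, reduceIte] at hA
        obtain ⟨hx, hA⟩ := hA
        subst hx
        simp only [secW, hi, if_pos rfl, reduceIte, DRd, List.headI, if_neg hi]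
        rw [dAux_secW_shift s hA hVR p.1 (by omega) his]

lemma secW_ne_nil (s : ℕ) {R : List (ℕ × TreeAut m)} {x : Fin m}
    (hA : AllS R x) (hR : R ≠ []) : secW s R x ≠ [] := by
  have := length_secW_of_allS s hA
  intro h
  rw [h] at this
  cases R with
  | nil => exact hR rfl
  | cons p R => simp at this

lemma headI_secW (s : ℕ) {R : List (ℕ × TreeAut m)} {x : Fin m}
    (hA : AllS R x) (hR : R ≠ []) :
    (secW s R x).headI.1 = if R.headI.1 = 0 then s - 1 else R.headI.1 - 1 := by
  cases R with
  | nil => exact absurd rfl hR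
  | cons p R =>
      by_cases hi : p.1 = 0
      · simp [secW, hi]
      · simp only [AllS, hi, reduceIte] at hA
        obtain ⟨hx, _⟩ := hA
        subst hx
        simp [secW, hi]

lemma allS_eq_cW {R : List (ℕ × TreeAut m)} {x : Fin m}
    (hA : AllS R x) (hBig : ∃ p ∈ R, p.1 ≠ 0) : x = cW R := by
  induction R generalizing x with
  | nil => simp at hBig
  | cons p R ih =>
      by_cases hi : p.1 = 0
      · simp only [AllS, hi, if_true, reduceIte] at hA
        have hBigR : ∃ q ∈ R, q.1 ≠ 0 := by
          obtain ⟨q, hq, hq0⟩ := hBig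
          rcases List.mem_cons.mp hq with rfl | hq'
          · exact absurd hi hq0
          · exact ⟨q, hq', hq0⟩
        have hx := ih hA hBigR
        unfold cW at hx ⊢
        have hd : dAux (p :: R) 0 = dAux R 0 * p.2 := by simp [dAux, hi]
        rw [hd, label_nil_mul, mul_inv_rev, Equiv.Perm.mul_apply, ← hx]
        simp
      · simp only [AllS, hi, reduceIte] at hA
        obtain ⟨hx, _⟩ := hA
        subst hx
        unfold cW
        simp only [dAux, if_neg hi]
        simp

/-- Evaluation of off-spine section words. -/
lemma evalW_secW_off (s : ℕ) {R : List (ℕ × TreeAut m)} {x z : Fin m}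
    (hA : AllS R z) (hx : x ≠ z) :
    evalW s (secW s R x) = betaAut s (s - 1) ((PRd R 0).sec [x]) := by
  induction R generalizing x z with
  | nil =>
      simp only [secW, evalW_nil, PRd, TreeAut.one_sec]
      rw [betaAut_one]
  | cons p R ih =>
      by_cases hi : p.1 = 0
      · simp only [AllS, hi, if_true, reduceIte] at hA
        have hinj : p.2.label [] x ≠ p.2.label [] z := fun h => hx (by
          have := (p.2.label []).injective h; exact this)
        simp only [secW, hi, if_true, reduceIte, evalW_cons]
        rw [ih hA hinj, ← betaAut_mul]
        have : (PRd R 0).sec [p.2.label [] x] * p.2.sec [x] = (PRd R 0 * p.2).sec [x] :=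
          (sec_single_mul _ _ _).symm
        rw [this]
        simp [PRd, hi]
      · simp only [AllS, hi, reduceIte] at hA
        obtain ⟨hz, hA⟩ := hA
        subst hz
        simp only [secW, hi, if_neg hx, reduceIte]
        rw [ih hA hx]
        simp [PRd, hi]

end AuxProof3
section AuxProof4

set_option linter.unusedSectionVars false
set_option linter.unnecessarySimpa false

open TreeAut

variable {m : ℕ} [NeZero m]

lemma sec_cons (a : TreeAut m) (x : Fin m) (w : List (Fin m)) :
    a.sec (x :: w) = (a.sec [x]).sec w := by
  rw [TreeAut.sec_sec]
  rfl

/-- Stability along the canonical spine. -/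
def StabF (s : ℕ) (R : List (ℕ × TreeAut m)) : Prop :=
  ∀ k, AllS (iterW s R k) (cW (iterW s R k))

/-- The state of a word. -/
def stateW (s : ℕ) (R : List (ℕ × TreeAut m)) : ℕ × TreeAut m × (Fin s → TreeAut m) :=
  (R.headI.1, DRd R, fun j => PRd R (j : ℕ))

lemma iterW_zero (s : ℕ) (R : List (ℕ × TreeAut m)) : iterW s R 0 = R := rfl

lemma iterW_succ (s : ℕ) (R : List (ℕ × TreeAut m)) (k : ℕ) :
    iterW s R (k + 1) = secW s (iterW s R k) (cW (iterW s R k)) := rfl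

lemma iterW_shift (s : ℕ) (R : List (ℕ × TreeAut m)) (k : ℕ) :
    iterW s (secW s R (cW R)) k = iterW s R (k + 1) := by
  induction k with
  | zero => rfl
  | succ k ih =>
      rw [iterW_succ, ih]
      rfl

lemma stabF_shift (s : ℕ) {R : List (ℕ × TreeAut m)} (h : StabF s R) :
    StabF s (secW s R (cW R)) := by
  intro k
  rw [iterW_shift]
  exact h (k + 1)

lemma secW_valid (s : ℕ) {G : Subgroup (TreeAut m)} (hss : SelfSimilar G) (hs : 1 ≤ s)
    {R : List (ℕ × TreeAut m)} (hV : ∀ p ∈ R, p.1 < s ∧ p.2 ∈ G) (x : Fin m) :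
    ∀ p ∈ secW s R x, p.1 < s ∧ p.2 ∈ G := by
  induction R generalizing x with
  | nil => simp [secW]
  | cons p R ih =>
      have hVR : ∀ q ∈ R, q.1 < s ∧ q.2 ∈ G := fun q hq => hV q (by simp [hq])
      have hp := hV p (by simp)
      by_cases hi : p.1 = 0
      · simp only [secW, hi, if_true, reduceIte]
        intro q hq
        rcases List.mem_cons.mp hq with rfl | hq'
        · exact ⟨by omega, hss _ hp.2 _⟩
        · exact ih hVR _ q hq'
      · by_cases hx : x = 0
        · simp only [secW, hi, hx, reduceIte]
          intro q hq
          rcases List.mem_cons.mp hq with rfl | hq'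
          · exact ⟨by omega, hp.2⟩
          · exact ih hVR _ q hq'
        · simp only [secW, hi, hx, reduceIte]
          exact ih hVR _

lemma iterW_valid (s : ℕ) {G : Subgroup (TreeAut m)} (hss : SelfSimilar G) (hs : 1 ≤ s)
    {R : List (ℕ × TreeAut m)} (hV : ∀ p ∈ R, p.1 < s ∧ p.2 ∈ G) (k : ℕ) :
    ∀ p ∈ iterW s R k, p.1 < s ∧ p.2 ∈ G := by
  induction k with
  | zero => exact hV
  | succ k ih => exact secW_valid s hss hs ih _

lemma iterW_ne_nil (s : ℕ) {R : List (ℕ × TreeAut m)} (hStab : StabF s R) (hR : R ≠ []) (k : ℕ) :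
    iterW s R k ≠ [] := by
  induction k with
  | zero => exact hR
  | succ k ih => exact secW_ne_nil s (hStab k) ih

lemma PRd_mem {G : Subgroup (TreeAut m)} {R : List (ℕ × TreeAut m)} {s : ℕ}
    (hV : ∀ p ∈ R, p.1 < s ∧ p.2 ∈ G) (j : ℕ) : PRd R j ∈ G := by
  induction R with
  | nil => exact one_mem G
  | cons p R ih =>
      have hVR : ∀ q ∈ R, q.1 < s ∧ q.2 ∈ G := fun q hq => hV q (by simp [hq])
      by_cases hi : p.1 = j <;> simp only [PRd, hi, reduceIte]
      · exact mul_mem (ih hVR) (hV p (by simp)).2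
      · exact ih hVR

lemma dAux_mem {G : Subgroup (TreeAut m)} {R : List (ℕ × TreeAut m)} {s : ℕ}
    (hV : ∀ p ∈ R, p.1 < s ∧ p.2 ∈ G) (j : ℕ) : dAux R j ∈ G := by
  induction R with
  | nil => exact one_mem G
  | cons p R ih =>
      have hVR : ∀ q ∈ R, q.1 < s ∧ q.2 ∈ G := fun q hq => hV q (by simp [hq])
      by_cases hi : p.1 = j <;> simp only [dAux, hi, reduceIte]
      · exact mul_mem (ih hVR) (hV p (by simp)).2
      · exact one_mem G

lemma DRd_mem {G : Subgroup (TreeAut m)} {R : List (ℕ × TreeAut m)} {s : ℕ}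
    (hV : ∀ p ∈ R, p.1 < s ∧ p.2 ∈ G) : DRd R ∈ G := by
  cases R with
  | nil => exact one_mem G
  | cons p R =>
      have hVR : ∀ q ∈ R, q.1 < s ∧ q.2 ∈ G := fun q hq => hV q (by simp [hq])
      exact mul_mem (dAux_mem (s := s) hVR p.1) (hV p (by simp)).2

lemma evalW_mem_basilica (s : ℕ) {G : Subgroup (TreeAut m)} {R : List (ℕ × TreeAut m)}
    (hV : ∀ p ∈ R, p.1 < s ∧ p.2 ∈ G) : evalW s R ∈ basilica s G := by
  induction R with
  | nil => exact one_mem _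
  | cons p R ih =>
      have hVR : ∀ q ∈ R, q.1 < s ∧ q.2 ∈ G := fun q hq => hV q (by simp [hq])
      refine mul_mem (ih hVR) (Subgroup.subset_closure ?_)
      exact ⟨p.2, (hV p (by simp)).2, p.1, (hV p (by simp)).1, rfl⟩

lemma evalW_inv (s : ℕ) (R : List (ℕ × TreeAut m)) :
    evalW s (R.reverse.map (fun p => (p.1, p.2⁻¹))) = (evalW s R)⁻¹ := by
  induction R with
  | nil => simp
  | cons p R ih =>
      simp only [List.reverse_cons, List.map_append, List.map_cons, List.map_nil]
      rw [evalW_append]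
      simp only [evalW_cons, evalW_nil, one_mul]
      rw [ih, betaAut_inv, mul_inv_rev]

lemma exists_word (s : ℕ) (G : Subgroup (TreeAut m)) {b : TreeAut m}
    (hb : b ∈ basilica s G) :
    ∃ R : List (ℕ × TreeAut m), (∀ p ∈ R, p.1 < s ∧ p.2 ∈ G) ∧ evalW s R = b := by
  induction hb using Subgroup.closure_induction with
  | mem x hx =>
      obtain ⟨g, hg, i, hi, rfl⟩ := hx
      exact ⟨[(i, g)], by simpa using ⟨hi, hg⟩, by simp⟩
  | one => exact ⟨[], by simp, rfl⟩
  | mul x y hx hy ihx ihy =>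
      obtain ⟨Rx, hVx, rfl⟩ := ihx
      obtain ⟨Ry, hVy, rfl⟩ := ihy
      refine ⟨Ry ++ Rx, ?_, ?_⟩
      · intro p hp
        rcases List.mem_append.mp hp with h | h
        · exact hVy p h
        · exact hVx p h
      · rw [evalW_append]
  | inv x hx ihx =>
      obtain ⟨R, hV, rfl⟩ := ihx
      refine ⟨R.reverse.map (fun p => (p.1, p.2⁻¹)), ?_, evalW_inv s R⟩
      intro p hp
      simp only [List.mem_map, List.mem_reverse] at hp
      obtain ⟨q, hq, rfl⟩ := hp
      exact ⟨(hV q hq).1, inv_mem (hV q hq).2⟩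

lemma evalW_sec_spine (s : ℕ) (R : List (ℕ × TreeAut m)) :
    ∀ k, (evalW s R).sec (spineW s R k) = evalW s (iterW s R k) := by
  intro k
  induction k with
  | zero => simp [spineW, iterW]
  | succ k ih =>
      have : spineW s R (k + 1) = spineW s R k ++ [cW (iterW s R k)] := rfl
      rw [this, ← TreeAut.sec_sec, ih, evalW_sec]
      rfl

lemma sec_decomp (s : ℕ) (R : List (ℕ × TreeAut m)) (j : ℕ) (x : Fin m) (w : List (Fin m)) :
    (evalW s R).sec (spineW s R j ++ x :: w)
      = (evalW s (secW s (iterW s R j) x)).sec w := by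
  have h1 : spineW s R j ++ x :: w = (spineW s R j ++ [x]) ++ w := by simp
  rw [h1, ← TreeAut.sec_sec, ← TreeAut.sec_sec, evalW_sec_spine, evalW_sec]

lemma spineW_length (s : ℕ) (R : List (ℕ × TreeAut m)) (k : ℕ) :
    (spineW s R k).length = k := by
  induction k with
  | zero => rfl
  | succ k ih => simp [spineW, ih]

lemma spineW_add (s : ℕ) (R : List (ℕ × TreeAut m)) (a b : ℕ) :
    ∃ w, spineW s R (a + b) = spineW s R a ++ w ∧ w.length = b := by
  induction b with
  | zero => exact ⟨[], by simp, rfl⟩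
  | succ b ih =>
      obtain ⟨w, hw, hl⟩ := ih
      exact ⟨w ++ [cW (iterW s R (a + b))], by simp [spineW, ← Nat.add_assoc, hw], by simp [hl]⟩

lemma path_split (s : ℕ) (R : List (ℕ × TreeAut m)) :
    ∀ v : List (Fin m), v = spineW s R v.length ∨
      ∃ j, ∃ x : Fin m, ∃ w, x ≠ cW (iterW s R j) ∧ v = spineW s R j ++ x :: w ∧
        v.length = j + 1 + w.length := by
  intro v
  induction v using List.reverseRecOn with
  | nil => left; rfl
  | append_singleton v y ih =>
      rcases ih with h | ⟨j, x, w, hx, hv, hl⟩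
      · by_cases hy : y = cW (iterW s R v.length)
        · left
          subst hy
          rw [List.length_append, List.length_singleton]
          have : spineW s R (v.length + 1) = spineW s R v.length ++ [cW (iterW s R v.length)] :=
            rfl
          rw [this, ← h]
        · right
          exact ⟨v.length, y, [], hy, by rw [← h], by simp⟩
      · right
        exact ⟨j, x, w ++ [y], hx, by rw [hv]; simp, by simp [hl]; omega⟩

end AuxProof4
section AuxProof5

set_option linter.unusedSectionVars false
set_option linter.unnecessarySimpa false

open TreeAut

variable {m : ℕ} [NeZero m]

lemma secW_idx (s : ℕ) (hs : 1 ≤ s) {R : List (ℕ × TreeAut m)}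
    (hV : ∀ p ∈ R, p.1 < s) (x : Fin m) : ∀ p ∈ secW s R x, p.1 < s := by
  induction R generalizing x with
  | nil => simp [secW]
  | cons p R ih =>
      have hVR : ∀ q ∈ R, q.1 < s := fun q hq => hV q (by simp [hq])
      by_cases hi : p.1 = 0
      · simp only [secW, hi, if_true, reduceIte]
        intro q hq
        rcases List.mem_cons.mp hq with rfl | hq'
        · omega
        · exact ih hVR _ q hq'
      · by_cases hx : x = 0
        · simp only [secW, hi, hx, reduceIte]
          intro q hq
          rcases List.mem_cons.mp hq with rfl | hq'
          · have := hV p (by simp); omega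
          · exact ih hVR _ q hq'
        · simp only [secW, hi, hx, reduceIte]
          exact ih hVR _

lemma iterW_idx (s : ℕ) (hs : 1 ≤ s) {R : List (ℕ × TreeAut m)}
    (hV : ∀ p ∈ R, p.1 < s) (k : ℕ) : ∀ p ∈ iterW s R k, p.1 < s := by
  induction k with
  | zero => exact hV
  | succ k ih => exact secW_idx s hs ih _

lemma cW_eq_of_state {R R' : List (ℕ × TreeAut m)} (hR : R ≠ []) (hR' : R' ≠ [])
    (h1 : R.headI.1 = R'.headI.1) (h2 : DRd R = DRd R') : cW R = cW R' := by
  unfold cW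
  rw [dAux_zero_eq_DRd hR, dAux_zero_eq_DRd hR', h1, h2]

/-- Words that are forever stable with equal states have equal evaluations. -/
lemma evalW_label_eq_of_state (s : ℕ) (hs : 1 ≤ s) :
    ∀ (u : List (Fin m)) (R R' : List (ℕ × TreeAut m)),
      R ≠ [] → R' ≠ [] → (∀ p ∈ R, p.1 < s) → (∀ p ∈ R', p.1 < s) →
      StabF s R → StabF s R' → stateW s R = stateW s R' →
      (evalW s R).label u = (evalW s R').label u := by
  intro u
  induction u with
  | nil =>
      intro R R' hR hR' hV hV' hS hS' hst
      rw [evalW_label_nil, evalW_label_nil]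
      have h3 : PRd R 0 = PRd R' 0 := by
        have := congrArg (fun t : ℕ × TreeAut m × (Fin s → TreeAut m) => t.2.2 ⟨0, hs⟩) hst
        simpa [stateW] using this
      rw [h3]
  | cons x u ih =>
      intro R R' hR hR' hV hV' hS hS' hst
      have hst1 : R.headI.1 = R'.headI.1 := by
        have := congrArg (fun t : ℕ × TreeAut m × (Fin s → TreeAut m) => t.1) hst
        simpa [stateW] using this
      have hst2 : DRd R = DRd R' := by
        have := congrArg (fun t : ℕ × TreeAut m × (Fin s → TreeAut m) => t.2.1) hst
        simpa [stateW] using this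
      have hstP : ∀ j : ℕ, j < s → PRd R j = PRd R' j := by
        intro j hj
        have := congrArg (fun t : ℕ × TreeAut m × (Fin s → TreeAut m) => t.2.2 ⟨j, hj⟩) hst
        simpa [stateW] using this
      have hc : cW R = cW R' := cW_eq_of_state hR hR' hst1 hst2
      have hA : AllS R (cW R) := hS 0
      have hA' : AllS R' (cW R') := hS' 0
      have lab : ∀ a : TreeAut m, a.label (x :: u) = (a.sec [x]).label u := fun a => by
        rw [TreeAut.sec_label]; rfl
      rw [lab, lab, evalW_sec, evalW_sec]
      by_cases hx : x = cW R
      · subst hx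
        have hsw : secW s R' (cW R) = secW s R' (cW R') := by rw [hc]
        rw [hsw]
        have e1 : (secW s R (cW R)).headI.1 = (secW s R' (cW R')).headI.1 := by
          rw [headI_secW s hA hR, headI_secW s hA' hR', hst1]
        have e2 : DRd (secW s R (cW R)) = DRd (secW s R' (cW R')) := by
          rw [DRd_secW s hA hV hR, DRd_secW s hA' hV' hR', hst1, hst2, hc]
        have e3 : ∀ j : Fin s, PRd (secW s R (cW R)) (j : ℕ)
            = PRd (secW s R' (cW R')) (j : ℕ) := by
          intro j
          rcases Nat.lt_or_ge ((j : ℕ) + 1) s with hj | hj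
          · rw [(PRd_secW s hA hV).1 _ hj, (PRd_secW s hA' hV').1 _ hj,
              hstP ((j : ℕ) + 1) hj]
          · have hj2 : (j : ℕ) = s - 1 := by have := j.isLt; omega
            rw [hj2, (PRd_secW s hA hV).2, (PRd_secW s hA' hV').2, hstP 0 (by omega), hc]
        exact ih _ _ (secW_ne_nil s hA hR) (secW_ne_nil s hA' hR')
          (secW_idx s hs hV _) (secW_idx s hs hV' _)
          (stabF_shift s hS) (stabF_shift s hS')
          (Prod.ext e1 (Prod.ext e2 (funext e3)))
      · have hx' : x ≠ cW R' := by rw [← hc]; exact hx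
        rw [evalW_secW_off s hA hx, evalW_secW_off s hA' hx', hstP 0 (by omega)]

end AuxProof5
section AuxProof6

set_option linter.unusedSectionVars false
set_option linter.unnecessarySimpa false

open TreeAut

variable {m : ℕ} [NeZero m]

lemma headI_mem' {α : Type*} [Inhabited α] {l : List α} (h : l ≠ []) : l.headI ∈ l := by
  cases l with
  | nil => exact absurd rfl h
  | cons a l => simp

lemma PRd_iterW_rep (s : ℕ) (hs : 1 ≤ s) {R : List (ℕ × TreeAut m)}
    (hV : ∀ p ∈ R, p.1 < s) (hS : StabF s R) :
    ∀ k j, j < s → ∃ j₀, j₀ < s ∧ ∃ w : List (Fin m),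
      k ≤ s * w.length + (s - 1 - j) ∧ PRd (iterW s R k) j = (PRd R j₀).sec w := by
  intro k
  induction k with
  | zero =>
      intro j hj
      exact ⟨j, hj, [], by omega, by rw [TreeAut.sec_nil]; rfl⟩
  | succ k ih =>
      intro j hj
      have hA : AllS (iterW s R k) (cW (iterW s R k)) := hS k
      have hVk : ∀ p ∈ iterW s R k, p.1 < s := iterW_idx s hs hV k
      rcases Nat.lt_or_ge (j + 1) s with hj1 | hj1
      · obtain ⟨j₀, hj₀, w, hlen, heq⟩ := ih (j + 1) hj1
        refine ⟨j₀, hj₀, w, by omega, ?_⟩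
        rw [iterW_succ, (PRd_secW s hA hVk).1 j hj1, heq]
      · have hj2 : j = s - 1 := by omega
        obtain ⟨j₀, hj₀, w, hlen, heq⟩ := ih 0 (by omega)
        refine ⟨j₀, hj₀, w ++ [cW (iterW s R k)], ?_, ?_⟩
        · have hmul : s * (w.length + 1) = s * w.length + s := by ring
          simp only [List.length_append, List.length_cons, List.length_nil, Nat.zero_add,
            Nat.add_zero]
          omega
        · rw [iterW_succ, hj2, (PRd_secW s hA hVk).2, heq, TreeAut.sec_sec]

lemma DRd_iterW_rep (s : ℕ) (hs : 1 ≤ s) {R : List (ℕ × TreeAut m)} (hR : R ≠ [])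
    (hV : ∀ p ∈ R, p.1 < s) (hS : StabF s R) :
    ∀ k, ∃ w : List (Fin m),
      s * w.length + R.headI.1 = k + (iterW s R k).headI.1 ∧
      DRd (iterW s R k) = (DRd R).sec w := by
  intro k
  induction k with
  | zero => exact ⟨[], by rw [iterW_zero]; simp, by rw [iterW_zero, TreeAut.sec_nil]⟩
  | succ k ih =>
      obtain ⟨w, hlen, heq⟩ := ih
      have hA : AllS (iterW s R k) (cW (iterW s R k)) := hS k
      have hVk : ∀ p ∈ iterW s R k, p.1 < s := iterW_idx s hs hV k
      have hNk : iterW s R k ≠ [] := iterW_ne_nil s hS hR k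
      have hrk : (iterW s R k).headI.1 < s := by
        have := hVk (iterW s R k).headI (headI_mem' hNk)
        exact this
      by_cases hr : (iterW s R k).headI.1 = 0
      · refine ⟨w ++ [cW (iterW s R k)], ?_, ?_⟩
        · rw [iterW_succ, headI_secW s hA hNk, if_pos hr]
          have hmul : s * (w.length + 1) = s * w.length + s := by ring
          simp only [List.length_append, List.length_cons, List.length_nil, Nat.zero_add,
            Nat.add_zero]
          omega
        · rw [iterW_succ, DRd_secW s hA hVk hNk, if_pos hr, heq, TreeAut.sec_sec]
      · refine ⟨w, ?_, ?_⟩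
        · rw [iterW_succ, headI_secW s hA hNk, if_neg hr]
          omega
        · rw [iterW_succ, DRd_secW s hA hVk hNk, if_neg hr, heq]

lemma betaAut_sec_struct (s : ℕ) (hs : 1 ≤ s) :
    ∀ (w : List (Fin m)) (i : ℕ) (g : TreeAut m), i < s →
      (betaAut s i g).sec w = 1 ∨
        ∃ j, j < s ∧ ∃ w', w.length ≤ s * w'.length + i + 1 ∧
          (betaAut s i g).sec w = betaAut s j (g.sec w') := by
  intro w
  induction w with
  | nil =>
      intro i g hi
      right
      exact ⟨i, hi, [], by simp, by rw [TreeAut.sec_nil, TreeAut.sec_nil]⟩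
  | cons x w ih =>
      intro i g hi
      rw [sec_cons]
      by_cases hi0 : i = 0
      · subst hi0
        rw [betaAut_sec_zero]
        rcases ih (s - 1) (g.sec [x]) (by omega) with h | ⟨j, hj, w', hlen, heq⟩
        · left; exact h
        · right
          refine ⟨j, hj, x :: w', ?_, ?_⟩
          · have hmul : s * (w'.length + 1) = s * w'.length + s := by ring
            simp only [List.length_cons]
            omega
          · rw [heq, ← sec_cons]
      · rw [betaAut_sec_pos s i hi0]
        by_cases hx : x = 0
        · rw [if_pos hx]
          rcases ih (i - 1) g (by omega) with h | ⟨j, hj, w', hlen, heq⟩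
          · left; exact h
          · right
            refine ⟨j, hj, w', by simp only [List.length_cons]; omega, heq⟩
        · rw [if_neg hx, TreeAut.one_sec]
          left; rfl

end AuxProof6
section AuxProof7

set_option linter.unusedSectionVars false
set_option linter.unnecessarySimpa false

open TreeAut

variable {m : ℕ} [NeZero m]

lemma stabF_iter (s : ℕ) {R : List (ℕ × TreeAut m)} (h : StabF s R) (k : ℕ) :
    StabF s (iterW s R k) := by
  induction k with
  | zero => exact h
  | succ k ih => exact stabF_shift s ih

lemma iterW_length_le (s : ℕ) (R : List (ℕ × TreeAut m)) (k : ℕ) :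
    (iterW s R k).length ≤ R.length := by
  induction k with
  | zero => exact le_refl _
  | succ k ih => exact le_trans (secW_length_le s _ _) ih

lemma path_split_at (s : ℕ) (R : List (ℕ × TreeAut m)) (J : ℕ) (v : List (Fin m))
    (hv : J < v.length) :
    (∃ j, j < J ∧ ∃ x w, x ≠ cW (iterW s R j) ∧ v = spineW s R j ++ x :: w ∧
        v.length = j + 1 + w.length)
    ∨ (∃ y w, v = spineW s R J ++ y :: w ∧ v.length = J + 1 + w.length) := by
  have hlen : ∀ (j : ℕ) (y : Fin m) (w : List (Fin m)), v = spineW s R j ++ y :: w →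
      v.length = j + 1 + w.length := by
    intro j y w hveq
    rw [hveq]
    simp [spineW_length]
    omega
  rcases path_split s R v with hsp | ⟨j, x, w, hx, hveq, hvl⟩
  · right
    obtain ⟨w, hw, hwl⟩ := spineW_add s R J (v.length - J)
    have : J + (v.length - J) = v.length := by omega
    rw [this] at hw
    cases w with
    | nil => rw [hw, List.append_nil] at hsp; rw [hsp, spineW_length] at hv; omega
    | cons y w' =>
        refine ⟨y, w', ?_, ?_⟩
        · rw [hsp, hw]
        · exact hlen J y w' (by rw [hsp, hw])
  · by_cases hj : j < J
    · exact Or.inl ⟨j, hj, x, w, hx, hveq, hvl⟩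
    · right
      obtain ⟨w₁, hw₁, hw₁l⟩ := spineW_add s R J (j - J)
      have : J + (j - J) = j := by omega
      rw [this] at hw₁
      cases w₁ with
      | nil =>
          refine ⟨x, w, ?_, ?_⟩
          · rw [hveq, hw₁, List.append_nil]
          · exact hlen J x w (by rw [hveq, hw₁, List.append_nil])
      | cons y t =>
          refine ⟨y, t ++ x :: w, ?_, ?_⟩
          · rw [hveq, hw₁]; simp
          · exact hlen J y (t ++ x :: w) (by rw [hveq, hw₁]; simp)

lemma exists_bound_fin {k : ℕ} (f : Fin k → ℕ) : ∃ K, ∀ x, f x ≤ K :=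
  ⟨Finset.univ.sup f, fun x => Finset.le_sup (Finset.mem_univ x)⟩

lemma exists_bound_nat (T : ℕ) (f : ℕ → ℕ) : ∃ K, ∀ j, j ≤ T → f j ≤ K := by
  induction T with
  | zero => exact ⟨f 0, fun j hj => by rw [Nat.le_zero.mp hj]⟩
  | succ T ih =>
      obtain ⟨K, hK⟩ := ih
      refine ⟨max K (f (T + 1)), fun j hj => ?_⟩
      by_cases h : j ≤ T
      · exact le_trans (hK j h) (le_max_left _ _)
      · have : j = T + 1 := by omega
        rw [this]
        exact le_max_right _ _

lemma exists_bound_nat_fin {k : ℕ} (T : ℕ) (f : ℕ → Fin k → ℕ) :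
    ∃ K, ∀ j, j ≤ T → ∀ x, f j x ≤ K := by
  obtain ⟨K, hK⟩ := exists_bound_nat T (fun j => Finset.univ.sup (f j))
  exact ⟨K, fun j hj x => le_trans (Finset.le_sup (Finset.mem_univ x)) (hK j hj)⟩

end AuxProof7

/-- If `G ≤ Aut(T)` is self-similar and contracting, then for every
`s ≥ 1` the `s`-th Basilica group `Bas_s(G)` is contracting. -/
theorem basilica_contracting {m : ℕ} [NeZero m] (hm : 2 ≤ m)
    (G : Subgroup (TreeAut m)) (hss : SelfSimilar G) (hc : Contracting G)
    (s : ℕ) (hs : 1 ≤ s) :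
    Contracting (basilica s G) := by
  classical
  obtain ⟨N, hNfin, hNsubG, hNc⟩ := hc
  choose kf hkf using hNc
  set kG : TreeAut m → ℕ := fun g => if h : g ∈ G then kf g h else 0 with hkGdef
  have hkG : ∀ g, g ∈ G → ∀ v : List (Fin m), kG g < v.length → g.sec v ∈ N := by
    intro g hg v hv
    have he : kG g = kf g hg := by simp [hkGdef, hg]
    rw [he] at hv
    exact hkf g hg v hv
  set N₁ : Set (TreeAut m) := insert 1 {h | ∃ n ∈ N, ∃ v, n.sec v = h} with hN₁def
  have hNN₁ : N ⊆ N₁ := fun n hn =>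
    Set.mem_insert_iff.mpr (Or.inr ⟨n, hn, [], TreeAut.sec_nil n⟩)
  have hN₁G : N₁ ⊆ (G : Set (TreeAut m)) := by
    rintro h hmem
    rcases Set.mem_insert_iff.mp hmem with rfl | ⟨n, hn, v, rfl⟩
    · exact one_mem G
    · exact hss n (hNsubG hn) v
  have hN₁sec : ∀ h ∈ N₁, ∀ v, TreeAut.sec h v ∈ N₁ := by
    rintro h hmem v
    rcases Set.mem_insert_iff.mp hmem with rfl | ⟨n, hn, w, rfl⟩
    · rw [TreeAut.one_sec]; exact Set.mem_insert _ _
    · exact Set.mem_insert_iff.mpr (Or.inr ⟨n, hn, w ++ v, (TreeAut.sec_sec n w v).symm⟩)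
  have hN₁fin : N₁.Finite := by
    apply Set.Finite.insert
    have hsub : {h | ∃ n ∈ N, ∃ v, n.sec v = h} ⊆ ⋃ n ∈ N, {h | ∃ v, n.sec v = h} := by
      rintro h ⟨n, hn, v, rfl⟩
      exact Set.mem_biUnion hn ⟨v, rfl⟩
    exact Set.Finite.subset
      (Set.Finite.biUnion hNfin
        (fun n hn => sections_finite hNfin (kG n) (fun v hv => hkG n (hNsubG hn) v hv))) hsub
  have hone₁ : (1 : TreeAut m) ∈ N₁ := Set.mem_insert _ _
  set Bs : Set (TreeAut m) := {h | ∃ j, j < s ∧ ∃ q ∈ N₁, h = betaAut s j q} with hBsdef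
  set Es : Set (TreeAut m) := {h | ∃ R : List (ℕ × TreeAut m), R ≠ [] ∧
      (∀ p ∈ R, p.1 < s ∧ p.2 ∈ G) ∧ StabF s R ∧
      DRd R ∈ N₁ ∧ (∀ j : ℕ, j < s → PRd R j ∈ N₁) ∧ evalW s R = h} with hEsdef
  set NN : Set (TreeAut m) := insert 1 (Bs ∪ Es) with hNNdef
  have hNN1 : (1 : TreeAut m) ∈ NN := Set.mem_insert _ _
  have hNNB : ∀ j, j < s → ∀ q ∈ N₁, betaAut s j q ∈ NN := fun j hj q hq =>
    Set.mem_insert_iff.mpr (Or.inr (Set.mem_union_left _ ⟨j, hj, q, hq, rfl⟩))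
  have hBfin : Bs.Finite := by
    apply Set.Finite.subset
      (Set.Finite.image (fun p : ℕ × TreeAut m => betaAut s p.1 p.2)
        ((Set.finite_Iio s).prod hN₁fin))
    rintro h ⟨j, hj, q, hq, rfl⟩
    exact ⟨(j, q), ⟨hj, hq⟩, rfl⟩
  have hEfin : Es.Finite := by
    have hfib : ∀ ξ : ℕ × TreeAut m × (Fin s → TreeAut m),
        {h | ∃ R : List (ℕ × TreeAut m), R ≠ [] ∧ (∀ p ∈ R, p.1 < s) ∧ StabF s R ∧
          stateW s R = ξ ∧ evalW s R = h}.Subsingleton := by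
      rintro ξ a ⟨Ra, hne, hidx, hsta, hsteq, rfl⟩ b ⟨Rb, hne', hidx', hsta', hsteq', rfl⟩
      exact TreeAut.ext_label fun u =>
        evalW_label_eq_of_state s hs u Ra Rb hne hne' hidx hidx' hsta hsta'
          (hsteq.trans hsteq'.symm)
    have hΞ : ((Set.Iio s) ×ˢ (N₁ ×ˢ {f : Fin s → TreeAut m | ∀ j, f j ∈ N₁})).Finite :=
      (Set.finite_Iio s).prod (hN₁fin.prod (Set.Finite.pi' (fun _ => hN₁fin)))
    apply Set.Finite.subset (Set.Finite.biUnion hΞ (fun ξ _ => (hfib ξ).finite))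
    rintro h ⟨R, hne, hV, hsta, hD, hP, rfl⟩
    refine Set.mem_biUnion (x := stateW s R) ?_ ?_
    · refine Set.mem_prod.mpr ⟨?_, Set.mem_prod.mpr ⟨?_, ?_⟩⟩
      · exact (hV _ (headI_mem' hne)).1
      · exact hD
      · exact fun j => hP (j : ℕ) j.isLt
    · exact ⟨R, hne, fun p hp => (hV p hp).1, hsta, rfl, rfl⟩
  have hNNfin : NN.Finite := (hBfin.union hEfin).insert 1
  have hNNsub : NN ⊆ (basilica s G : Set (TreeAut m)) := by
    rintro h hmem
    rcases Set.mem_insert_iff.mp hmem with rfl | hmem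
    · exact one_mem _
    rcases hmem with ⟨j, hj, q, hq, rfl⟩ | ⟨R, _, hV, _, _, _, rfl⟩
    · exact Subgroup.subset_closure ⟨q, hN₁G hq, j, hj, rfl⟩
    · exact evalW_mem_basilica s hV
  refine ⟨NN, hNNfin, hNNsub, ?_⟩
  intro b hb
  obtain ⟨R₀, hVR₀, rfl⟩ := exists_word s G hb
  have main : ∀ (L : ℕ) (R : List (ℕ × TreeAut m)), R.length ≤ L →
      (∀ p ∈ R, p.1 < s ∧ p.2 ∈ G) →
      ∃ k, ∀ v : List (Fin m), k < v.length → (evalW s R).sec v ∈ NN := by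
    intro L
    induction L with
    | zero =>
        intro R hlen _
        have hR : R = [] := List.length_eq_zero_iff.mp (Nat.le_zero.mp hlen)
        subst hR
        exact ⟨0, fun v _ => by rw [evalW_nil, TreeAut.one_sec]; exact hNN1⟩
    | succ L ihL =>
        intro R hlen hV
        by_cases hR0 : R = []
        · subst hR0
          exact ⟨0, fun v _ => by rw [evalW_nil, TreeAut.one_sec]; exact hNN1⟩
        have hVidx : ∀ p ∈ R, p.1 < s := fun p hp => (hV p hp).1
        have hQmem : ∀ (j : ℕ) (x : Fin m), (PRd (iterW s R j) 0).sec [x] ∈ G := fun j x =>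
          hss _ (PRd_mem (iterW_valid s hss hs hV j) 0) _
        have offmem : ∀ (j : ℕ) (x : Fin m) (w : List (Fin m)),
            AllS (iterW s R j) (cW (iterW s R j)) → x ≠ cW (iterW s R j) →
            (s * (kG ((PRd (iterW s R j) 0).sec [x]) + 2) < w.length ∨
              (PRd (iterW s R j) 0).sec [x] ∈ N₁) →
            (evalW s R).sec (spineW s R j ++ x :: w) ∈ NN := by
          intro j x w hA hx hcase
          rw [sec_decomp, evalW_secW_off s hA hx]
          rcases betaAut_sec_struct s hs w (s - 1) ((PRd (iterW s R j) 0).sec [x]) (by omega)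
            with h1 | ⟨j', hj', w', hlen', heq⟩
          · rw [h1]; exact hNN1
          · rw [heq]
            refine hNNB j' hj' _ ?_
            rcases hcase with hdeep | hq₁
            · have hkq : kG ((PRd (iterW s R j) 0).sec [x]) < w'.length := by
                have hmono : w'.length ≤ kG ((PRd (iterW s R j) 0).sec [x]) →
                    s * w'.length ≤ s * kG ((PRd (iterW s R j) 0).sec [x]) :=
                  fun hcon => Nat.mul_le_mul_left s hcon
                by_contra hcon
                push_neg at hcon
                have h5 := hmono hcon
                have hmul1 : s * (kG ((PRd (iterW s R j) 0).sec [x]) + 2)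
                    = s * kG ((PRd (iterW s R j) 0).sec [x]) + 2 * s := by ring
                omega
              exact hNN₁ (hkG _ (hQmem j x) w' hkq)
            · exact hN₁sec _ hq₁ w'
        by_cases hstab : StabF s R
        · -- forever stable: deep sections are states or deep beta elements
          obtain ⟨KG, hKGD, hKGP⟩ : ∃ KG, kG (DRd R) ≤ KG ∧ ∀ j, j ≤ s → kG (PRd R j) ≤ KG := by
            obtain ⟨K0, hK0⟩ := exists_bound_nat s (fun j => kG (PRd R j))
            exact ⟨max (kG (DRd R)) K0, le_max_left _ _,
              fun j hj => le_trans (hK0 j hj) (le_max_right _ _)⟩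
          have he1 : s * (KG + 2) = s * (KG + 1) + s := by ring
          set T : ℕ := s * (KG + 2) + s with hTdef
          obtain ⟨K, hK⟩ : ∃ K, ∀ j, j ≤ T → ∀ x : Fin m,
              s * (kG ((PRd (iterW s R j) 0).sec [x]) + 2) ≤ K :=
            exists_bound_nat_fin T (fun j x => s * (kG ((PRd (iterW s R j) 0).sec [x]) + 2))
          refine ⟨T + 1 + K, fun v hv => ?_⟩
          rcases path_split s R v with hsp | ⟨j, x, w, hx, hveq, hvlen⟩
          · rw [hsp, evalW_sec_spine]
            have hkT : T < v.length := by omega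
            have hne : iterW s R v.length ≠ [] := iterW_ne_nil s hstab hR0 v.length
            have hVk := iterW_valid s hss hs hV v.length
            obtain ⟨wD, hDlen, hDeq⟩ := DRd_iterW_rep s hs hR0 hVidx hstab v.length
            have hr0 : R.headI.1 < s := hVidx _ (headI_mem' hR0)
            have hrk : (iterW s R v.length).headI.1 < s :=
              iterW_idx s hs hVidx v.length _ (headI_mem' hne)
            have hDmem : DRd (iterW s R v.length) ∈ N₁ := by
              have h3 : s * (KG + 1) < s * wD.length := by omega
              have h4 := Nat.lt_of_mul_lt_mul_left h3
              rw [hDeq]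
              exact hNN₁ (hkG _ (DRd_mem hV) wD (by omega))
            have hPmem : ∀ j : ℕ, j < s → PRd (iterW s R v.length) j ∈ N₁ := by
              intro j hj
              obtain ⟨j₀, hj₀, wP, hPlen, hPeq⟩ :=
                PRd_iterW_rep s hs hVidx hstab v.length j hj
              have hsup : kG (PRd R j₀) ≤ KG := hKGP j₀ (by omega)
              have h3 : s * (KG + 1) < s * wP.length := by omega
              have h4 := Nat.lt_of_mul_lt_mul_left h3
              rw [hPeq]
              exact hNN₁ (hkG _ (PRd_mem hV j₀) wP (by omega))
            refine Set.mem_insert_iff.mpr (Or.inr (Set.mem_union_right _ ?_))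
            exact ⟨iterW s R v.length, hne, hVk, stabF_iter s hstab v.length, hDmem, hPmem, rfl⟩
          · have hA := hstab j
            rw [hveq]
            by_cases hjT : j ≤ T
            · refine offmem j x w hA hx (Or.inl ?_)
              have hsup := hK j hjT x
              omega
            · refine offmem j x w hA hx (Or.inr ?_)
              obtain ⟨j₀, hj₀, wP, hPlen, hPeq⟩ :=
                PRd_iterW_rep s hs hVidx hstab j 0 (by omega)
              have hsup : kG (PRd R j₀) ≤ KG := hKGP j₀ (by omega)
              have h3 : s * (KG + 1) < s * wP.length := by omega
              have h4 := Nat.lt_of_mul_lt_mul_left h3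
              have hmemN : PRd (iterW s R j) 0 ∈ N₁ := by
                rw [hPeq]
                exact hNN₁ (hkG _ (PRd_mem hV j₀) wP (by omega))
              exact hN₁sec _ hmemN [x]
        · -- a break occurs: pass to strictly shorter words
          simp only [StabF, not_forall] at hstab
          set k₀ := Nat.find hstab with hk₀def
          have hbrk : ¬ AllS (iterW s R k₀) (cW (iterW s R k₀)) := Nat.find_spec hstab
          have hbefore : ∀ j, j < k₀ → AllS (iterW s R j) (cW (iterW s R j)) :=
            fun j hj => not_not.mp (Nat.find_min hstab hj)
          have hallshort : ∀ x : Fin m, ¬ AllS (iterW s R k₀) x := by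
            intro x hAx
            by_cases hbig : ∃ p ∈ iterW s R k₀, p.1 ≠ 0
            · have hxc := allS_eq_cW hAx hbig
              rw [hxc] at hAx
              exact hbrk hAx
            · push_neg at hbig
              exact hbrk (allS_of_all_zero hbig _)
          have hchild : ∀ x : Fin m, ∃ k, ∀ v : List (Fin m), k < v.length →
              (evalW s (secW s (iterW s R k₀) x)).sec v ∈ NN := by
            intro x
            apply ihL
            · have h1 : (secW s (iterW s R k₀) x).length < (iterW s R k₀).length :=
                length_secW_lt s (hallshort x)
              have h2 := iterW_length_le s R k₀
              omega
            · exact secW_valid s hss hs (iterW_valid s hss hs hV k₀) x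
          choose kch hkch using hchild
          obtain ⟨K₁, hK₁⟩ := exists_bound_fin kch
          obtain ⟨K₂, hK₂⟩ : ∃ K, ∀ j, j ≤ k₀ → ∀ x : Fin m,
              s * (kG ((PRd (iterW s R j) 0).sec [x]) + 2) ≤ K :=
            exists_bound_nat_fin k₀ (fun j x => s * (kG ((PRd (iterW s R j) 0).sec [x]) + 2))
          refine ⟨k₀ + 1 + K₁ + K₂, fun v hv => ?_⟩
          rcases path_split_at s R k₀ v (by omega) with
            ⟨j, hj, x, w, hx, hveq, hvlen⟩ | ⟨y, w, hveq, hvlen⟩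
          · rw [hveq]
            refine offmem j x w (hbefore j hj) hx (Or.inl ?_)
            have hsup := hK₂ j (by omega) x
            omega
          · rw [hveq, sec_decomp]
            refine hkch y w ?_
            have hsup : kch y ≤ K₁ := hK₁ y
            omega
  exact main R₀.length R₀ le_rfl hVR₀

end Basilica
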